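/- Let p be a prime, s a positive integer, q = p^s, R = Z_q[u]/(u^2), and let f ∈ R[X] be a basic irreducible polynomial. Set S = R[X]/(f). Then an element r ∈ S is a unit of S if and only if r does not lie in the ideal of S generated by the images of the constants p and u. -/

import Mathlib

open Polynomial

/-- The reduction map `R = Z_q[u]/(u^2) → F_p` sending `a + b·u` to `a mod p`. -/
noncomputable def dualRed (p s : ℕ) (hs : 0 < s) :
    DualNumber (ZMod (p ^ s)) →+* ZMod p :=
  (ZMod.castHom (dvd_pow_self p hs.ne') (ZMod p)).comp
    (TrivSqZeroExt.fstHom (ZMod (p ^ s)) (ZMod (p ^ s)) (ZMod (p ^ s))).toRingHom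

theorem dualRed_surjective (p s : ℕ) [Fact p.Prime] (hs : 0 < s) :
    Function.Surjective (dualRed p s hs) := by
  intro c
  refine ⟨TrivSqZeroExt.inl ((c.val : ℕ) : ZMod (p ^ s)), ?_⟩
  have : NeZero p := ⟨(Fact.out : p.Prime).ne_zero⟩
  simp [dualRed, ZMod.castHom_apply, ZMod.natCast_rightInverse c]

theorem ker_dualRed (p s : ℕ) [Fact p.Prime] (hs : 0 < s)
    (x : DualNumber (ZMod (p ^ s))) (hx : dualRed p s hs x = 0) :
    x ∈ Ideal.span {((p : DualNumber (ZMod (p ^ s)))), DualNumber.eps} := by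
  have hne : NeZero (p ^ s) := ⟨pow_ne_zero s (Fact.out : p.Prime).ne_zero⟩
  -- fst x is divisible by p in ZMod (p ^ s)
  have h1 : ((x.fst.val : ℕ) : ZMod p) = 0 := by
    have : (ZMod.castHom (dvd_pow_self p hs.ne') (ZMod p)) x.fst = 0 := hx
    rwa [show x.fst = ((x.fst.val : ℕ) : ZMod (p ^ s)) from
      (ZMod.natCast_rightInverse x.fst).symm, map_natCast] at this
  obtain ⟨t, ht⟩ := (ZMod.natCast_eq_zero_iff _ p).mp h1
  have h2 : x.fst = (p : ZMod (p ^ s)) * (t : ZMod (p ^ s)) := by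
    rw [show x.fst = ((x.fst.val : ℕ) : ZMod (p ^ s)) from
      (ZMod.natCast_rightInverse x.fst).symm, ht]
    push_cast; ring
  have hx' : x = TrivSqZeroExt.inl x.fst + TrivSqZeroExt.inr x.snd :=
    (TrivSqZeroExt.inl_fst_add_inr_snd_eq x).symm
  rw [hx', h2]
  refine Ideal.add_mem _ ?_ ?_
  · have : TrivSqZeroExt.inl ((p : ZMod (p ^ s)) * (t : ZMod (p ^ s)))
        = (p : DualNumber (ZMod (p ^ s))) * TrivSqZeroExt.inl ((t : ZMod (p ^ s))) := by
      rw [TrivSqZeroExt.inl_mul]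
      norm_cast
    rw [this]
    exact Ideal.mul_mem_right _ _ (Ideal.subset_span (by simp))
  · have : TrivSqZeroExt.inr x.snd
        = TrivSqZeroExt.inl x.snd * (DualNumber.eps : DualNumber (ZMod (p ^ s))) := by
      rw [DualNumber.eps, TrivSqZeroExt.inl_mul_inr, smul_eq_mul, mul_one]
    rw [this]
    exact Ideal.mul_mem_left _ _ (Ideal.subset_span (by simp))

set_option maxHeartbeats 1600000 in
/-- Units of `S = R[X]/(f)` (for `f` basic irreducible) are exactly the elements
outside the ideal generated by (the images of) `p` and `u`. -/
theorem unit_iff_not_mem_pu (p s : ℕ) [Fact p.Prime] (hs : 0 < s)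
    (f : Polynomial (DualNumber (ZMod (p ^ s))))
    (hfm : f.Monic) (hfi : Irreducible (f.map (dualRed p s hs)))
    (r : AdjoinRoot f) :
    IsUnit r ↔ r ∉ Ideal.span
      {AdjoinRoot.mk f (C ((p : DualNumber (ZMod (p ^ s))))),
       AdjoinRoot.mk f (C (DualNumber.eps : DualNumber (ZMod (p ^ s))))} := by
  set R := DualNumber (ZMod (p ^ s))
  set red := dualRed p s hs with hred
  set fb := f.map red with hfb
  haveI : Fact (Irreducible fb) := ⟨hfi⟩
  set J : Ideal (AdjoinRoot f) := Ideal.span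
      {AdjoinRoot.mk f (C ((p : R))), AdjoinRoot.mk f (C (DualNumber.eps : R))} with hJ
  -- the reduction map Φ : S → F_p[X]/(fb)
  have hev : f.eval₂ ((AdjoinRoot.of fb).comp red) (AdjoinRoot.root fb) = 0 := by
    rw [← Polynomial.eval₂_map, ← hfb]
    exact AdjoinRoot.eval₂_root fb
  set Φ : AdjoinRoot f →+* AdjoinRoot fb :=
    AdjoinRoot.lift ((AdjoinRoot.of fb).comp red) (AdjoinRoot.root fb) hev with hΦ
  have hΦmk : ∀ g : Polynomial R, Φ (AdjoinRoot.mk f g) = AdjoinRoot.mk fb (g.map red) := by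
    intro g
    rw [hΦ, AdjoinRoot.lift_mk, ← Polynomial.eval₂_map, ← AdjoinRoot.algebraMap_eq,
      ← Polynomial.aeval_def, AdjoinRoot.aeval_eq]
  -- J is contained in the kernel of Φ
  have hJker : J ≤ RingHom.ker Φ := by
    rw [hJ, Ideal.span_le]
    rintro x (rfl | rfl)
    · rw [SetLike.mem_coe, RingHom.mem_ker, hΦmk]
      rw [Polynomial.map_C, map_natCast, ZMod.natCast_self, map_zero, map_zero]
    · rw [SetLike.mem_coe, RingHom.mem_ker, hΦmk]
      have : red (DualNumber.eps : R) = 0 := by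
        have h0 : red (DualNumber.eps : R) = (ZMod.castHom (dvd_pow_self p hs.ne') (ZMod p))
            (TrivSqZeroExt.fst (DualNumber.eps : R)) := rfl
        rw [h0, DualNumber.eps, TrivSqZeroExt.fst_inr, map_zero]
      rw [Polynomial.map_C, this, map_zero, map_zero]
  -- the kernel of Φ is contained in J
  have hkerJ : RingHom.ker Φ ≤ J := by
    intro x hx
    obtain ⟨g, rfl⟩ := AdjoinRoot.mk_surjective x
    rw [RingHom.mem_ker, hΦmk, AdjoinRoot.mk_eq_zero] at hx
    obtain ⟨hb, hh⟩ := hx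
    obtain ⟨h, rfl⟩ := Polynomial.map_surjective red (dualRed_surjective p s hs) hb
    -- g - f * h maps to 0 under coefficientwise reduction
    have hcoeff : ∀ n, red ((g - f * h).coeff n) = 0 := by
      intro n
      have : (g - f * h).map red = 0 := by
        rw [Polynomial.map_sub, Polynomial.map_mul, ← hfb, ← hh, sub_self]
      calc red ((g - f * h).coeff n) = ((g - f * h).map red).coeff n :=
            (Polynomial.coeff_map red n).symm
        _ = 0 := by rw [this, Polynomial.coeff_zero]
    have hmem : g - f * h ∈ Ideal.map (C : R →+* Polynomial R)
        (Ideal.span {((p : R)), DualNumber.eps}) := by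
      rw [Ideal.mem_map_C_iff]
      exact fun n => ker_dualRed p s hs _ (hcoeff n)
    have : AdjoinRoot.mk f (g - f * h) ∈ J := by
      rw [Ideal.map_span, Set.image_insert_eq, Set.image_singleton] at hmem
      have := Ideal.mem_map_of_mem (AdjoinRoot.mk f) hmem
      rwa [Ideal.map_span, Set.image_insert_eq, Set.image_singleton] at this
    have heq : AdjoinRoot.mk f g = AdjoinRoot.mk f (g - f * h) := by
      rw [map_sub, map_mul, AdjoinRoot.mk_self, zero_mul, sub_zero]
    rwa [heq]
  -- J consists of nilpotent elements
  have hJnil : J ≤ nilradical (AdjoinRoot f) := by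
    rw [hJ, Ideal.span_le]
    rintro x (rfl | rfl)
    · rw [SetLike.mem_coe, mem_nilradical]
      refine ⟨s, ?_⟩
      rw [← map_pow, ← map_pow]
      have : ((p : R)) ^ s = ((p ^ s : ℕ) : R) := (Nat.cast_pow p s).symm
      rw [this, show ((p ^ s : ℕ) : R) = 0 by
        rw [← TrivSqZeroExt.inl_natCast, ZMod.natCast_self, TrivSqZeroExt.inl_zero]]
      rw [map_zero, map_zero]
    · rw [SetLike.mem_coe, mem_nilradical]
      refine ⟨2, ?_⟩
      rw [← map_pow, ← map_pow, sq, DualNumber.eps_mul_eps, map_zero, map_zero]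
  constructor
  · intro hu hmem
    have : (1 : AdjoinRoot fb) = 0 := by
      have h1 : (1 : AdjoinRoot f) ∈ J :=
        (Ideal.eq_top_of_isUnit_mem J hmem hu) ▸ Submodule.mem_top
      have h2 := hJker h1
      rwa [RingHom.mem_ker, map_one] at h2
    exact one_ne_zero this
  · intro hr
    have hΦr : Φ r ≠ 0 := fun h0 => hr (hkerJ h0)
    -- Φ is surjective
    have hΦsurj : Function.Surjective Φ := by
      intro y
      obtain ⟨gb, rfl⟩ := AdjoinRoot.mk_surjective y
      obtain ⟨g, rfl⟩ := Polynomial.map_surjective red (dualRed_surjective p s hs) gb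
      exact ⟨AdjoinRoot.mk f g, hΦmk g⟩
    obtain ⟨y, hy⟩ := hΦsurj (Φ r)⁻¹
    have hker1 : y * r - 1 ∈ RingHom.ker Φ := by
      rw [RingHom.mem_ker, map_sub, map_mul, hy, map_one, inv_mul_cancel₀ hΦr, sub_self]
    have hnil : IsNilpotent (y * r - 1) := mem_nilradical.mp (hJnil (hkerJ hker1))
    have : IsUnit (y * r) := by
      have := IsNilpotent.isUnit_one_add hnil
      rwa [add_sub_cancel] at this
    exact isUnit_of_mul_isUnit_right this
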